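/- Let f(x) = (1 − x)/(1 + x) and let x ∈ (0,1) be irrational with OOCF partial quotients (a_n, ε_n) and principal convergents p_n/q_n. Then f(x) is irrational and, for every n ≥ 1, the EICF partial quotients of f(x) satisfy b_n(f(x)) = 2·a_n + ε_n − 1 and η_n(f(x)) = ε_n; moreover the EICF convergents of f(x) satisfy p^E_n(f(x))/q^E_n(f(x)) = (q_n − p_n)/(q_n + p_n) = f(p_n/q_n). -/

import Mathlib

/-- The odd-odd continued fraction map on `[0,1]`.  For `x ∈ [(k-1)/k, k/(k+1))` with `k ≥ 1`
one has `k = ⌊1/(1-x)⌋`, and the two branches are separated by `(2k-1)/(2k+1)`. -/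
noncomputable def oocfT (x : ℝ) : ℝ :=
  if x = 1 then 1
  else if x < (2 * (⌊1 / (1 - x)⌋ : ℝ) - 1) / (2 * (⌊1 / (1 - x)⌋ : ℝ) + 1) then
    ((⌊1 / (1 - x)⌋ : ℝ) * x - ((⌊1 / (1 - x)⌋ : ℝ) - 1)) /
      ((⌊1 / (1 - x)⌋ : ℝ) - ((⌊1 / (1 - x)⌋ : ℝ) + 1) * x)
  else
    ((⌊1 / (1 - x)⌋ : ℝ) - ((⌊1 / (1 - x)⌋ : ℝ) + 1) * x) /
      ((⌊1 / (1 - x)⌋ : ℝ) * x - ((⌊1 / (1 - x)⌋ : ℝ) - 1))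

/-- OOCF partial quotient `a` of a point `y`: `a = k+1` if `y` is in the lower branch
interval `((k-1)/k, (2k-1)/(2k+1))`, and `a = k` if `y ∈ ((2k-1)/(2k+1), k/(k+1))`,
where `k = ⌊1/(1-y)⌋`. -/
noncomputable def oocfA (y : ℝ) : ℤ :=
  if y < (2 * (⌊1 / (1 - y)⌋ : ℝ) - 1) / (2 * (⌊1 / (1 - y)⌋ : ℝ) + 1) then ⌊1 / (1 - y)⌋ + 1
  else ⌊1 / (1 - y)⌋

/-- OOCF partial quotient `ε` of a point `y`: `ε = -1` on the lower branch interval and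
`ε = 1` on the upper one. -/
noncomputable def oocfE (y : ℝ) : ℤ :=
  if y < (2 * (⌊1 / (1 - y)⌋ : ℝ) - 1) / (2 * (⌊1 / (1 - y)⌋ : ℝ) + 1) then -1 else 1

/-- The OOCF convergents `(p'_n, q'_n, p_n, q_n)` of `x`, defined by
`p'_0 = 1, q'_0 = 0, p_0 = 1, q_0 = 1` and
`p'_n = a_n p_{n-1} - p'_{n-1}`, `q'_n = a_n q_{n-1} - q'_{n-1}`,
`p_n = 2 p'_n + ε_n p_{n-1}`, `q_n = 2 q'_n + ε_n q_{n-1}`,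
where `(a_n, ε_n)` are the partial quotients of `x`, i.e. `a_n = oocfA (oocfT^[n-1] x)`,
`ε_n = oocfE (oocfT^[n-1] x)`. -/
noncomputable def oocfConv (x : ℝ) : ℕ → ℤ × ℤ × ℤ × ℤ
  | 0 => (1, 0, 1, 1)
  | n + 1 =>
    let c := oocfConv x n
    (oocfA (oocfT^[n] x) * c.2.2.1 - c.1,
     oocfA (oocfT^[n] x) * c.2.2.2 - c.2.1,
     2 * (oocfA (oocfT^[n] x) * c.2.2.1 - c.1) + oocfE (oocfT^[n] x) * c.2.2.1,
     2 * (oocfA (oocfT^[n] x) * c.2.2.2 - c.2.1) + oocfE (oocfT^[n] x) * c.2.2.2)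

/-- `n`-th sub-convergent numerator `p'_n`. -/
noncomputable def oocfP' (x : ℝ) (n : ℕ) : ℤ := (oocfConv x n).1

/-- `n`-th sub-convergent denominator `q'_n`. -/
noncomputable def oocfQ' (x : ℝ) (n : ℕ) : ℤ := (oocfConv x n).2.1

/-- `n`-th principal convergent numerator `p_n`. -/
noncomputable def oocfP (x : ℝ) (n : ℕ) : ℤ := (oocfConv x n).2.2.1

/-- `n`-th principal convergent denominator `q_n`. -/
noncomputable def oocfQ (x : ℝ) (n : ℕ) : ℤ := (oocfConv x n).2.2.2

/-- `n`-th pseudo-convergent numerator: `p''_n = p'_n + ε_n p_{n-1}` for `n ≥ 1`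
(with the convention `p''_0 = 0`). -/
noncomputable def oocfP'' (x : ℝ) : ℕ → ℤ
  | 0 => 0
  | n + 1 => oocfP' x (n + 1) + oocfE (oocfT^[n] x) * oocfP x n

/-- `n`-th pseudo-convergent denominator: `q''_n = q'_n + ε_n q_{n-1}` for `n ≥ 1`
(with the convention `q''_0 = 1`). -/
noncomputable def oocfQ'' (x : ℝ) : ℕ → ℤ
  | 0 => 1
  | n + 1 => oocfQ' x (n + 1) + oocfE (oocfT^[n] x) * oocfQ x n

/-- The even integer continued fraction map on `[0,1]`: `0 ↦ 0`, and for `k ≥ 1`,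
`x ↦ 1/x - 2k` if `x ∈ [1/(2k+1), 1/(2k)]`, `x ↦ 2k - 1/x` if `x ∈ (1/(2k), 1/(2k-1)]`;
here `k = ⌊(1/x + 1)/2⌋`. -/
noncomputable def eicfT (x : ℝ) : ℝ :=
  if x = 0 then 0
  else if 2 * (⌊(1 / x + 1) / 2⌋ : ℝ) ≤ 1 / x then 1 / x - 2 * (⌊(1 / x + 1) / 2⌋ : ℝ)
  else 2 * (⌊(1 / x + 1) / 2⌋ : ℝ) - 1 / x

/-- EICF partial quotient `b` at a point `z`: `b = 2k` where `k = ⌊(1/z + 1)/2⌋`. -/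
noncomputable def eicfB (z : ℝ) : ℤ := 2 * ⌊(1 / z + 1) / 2⌋

/-- EICF partial quotient `η` at a point `z`: `η = 1` if `z ∈ (1/(2k+1), 1/(2k))`
and `η = -1` if `z ∈ (1/(2k), 1/(2k-1))`. -/
noncomputable def eicfEta (z : ℝ) : ℤ :=
  if 2 * (⌊(1 / z + 1) / 2⌋ : ℝ) < 1 / z then 1 else -1

/-- `η_n` for `n ≥ 0`, with `η_0 = 1` and `η_n = eicfEta (eicfT^[n-1] y)` for `n ≥ 1`. -/
noncomputable def eicfEta0 (y : ℝ) : ℕ → ℤ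
  | 0 => 1
  | n + 1 => eicfEta (eicfT^[n] y)

/-- EICF convergents of `y`, with index shifted by one: `eicfPQ y (n+1) = (p^E_n, q^E_n)`,
so `eicfPQ y 0 = (1, 0)`, `eicfPQ y 1 = (0, 1)` and
`p^E_n = b_n p^E_{n-1} + η_{n-1} p^E_{n-2}`, `q^E_n = b_n q^E_{n-1} + η_{n-1} q^E_{n-2}`. -/
noncomputable def eicfPQ (y : ℝ) : ℕ → ℤ × ℤ
  | 0 => (1, 0)
  | 1 => (0, 1)
  | n + 2 =>
    (eicfB (eicfT^[n] y) * (eicfPQ y (n + 1)).1 + eicfEta0 y n * (eicfPQ y n).1,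
     eicfB (eicfT^[n] y) * (eicfPQ y (n + 1)).2 + eicfEta0 y n * (eicfPQ y n).2)


lemma irr_mobius {y : ℝ} (hy : Irrational y) (a b c d : ℤ)
    (hdet : a * d ≠ b * c) (hden : (c : ℝ) + (d : ℝ) * y ≠ 0) :
    Irrational (((a : ℝ) + (b : ℝ) * y) / ((c : ℝ) + (d : ℝ) * y)) := by
  rintro ⟨q, hq⟩
  rw [eq_comm, div_eq_iff hden] at hq
  by_cases hbd : (b : ℚ) = q * d
  · have hb : (b : ℝ) = (q : ℝ) * d := by exact_mod_cast hbd
    have hac : (a : ℝ) = (q : ℝ) * c := by linear_combination hq - y * hb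
    have hac' : (a : ℚ) = q * c := by exact_mod_cast hac
    apply hdet
    have : (a : ℚ) * d = b * c := by rw [hac', hbd]; ring
    exact_mod_cast this
  · apply hy
    refine ⟨(q * c - a) / (b - q * d), ?_⟩
    have hbd' : ((b : ℝ) - q * d) ≠ 0 := by
      intro h
      exact hbd (by exact_mod_cast (sub_eq_zero.mp (by exact_mod_cast h) : (b:ℝ) = q * d))
    push_cast
    rw [div_eq_iff hbd']
    linear_combination -hq

set_option maxHeartbeats 1000000 in
lemma oocf_pointwise {y : ℝ} (hy0 : 0 < y) (hy1 : y < 1) (hirr : Irrational y) :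
    Irrational (oocfT y) ∧ oocfT y ∈ Set.Ioo (0:ℝ) 1 ∧
    eicfT ((1 - y) / (1 + y)) = (1 - oocfT y) / (1 + oocfT y) ∧
    eicfB ((1 - y) / (1 + y)) = 2 * oocfA y + oocfE y - 1 ∧
    eicfEta ((1 - y) / (1 + y)) = oocfE y ∧
    1 ≤ oocfA y ∧ (oocfE y = -1 → 2 ≤ oocfA y) ∧ (oocfE y = 1 ∨ oocfE y = -1) := by
  have h1y : (0:ℝ) < 1 - y := by linarith
  have h1y' : (0:ℝ) < 1 + y := by linarith
  set k : ℤ := ⌊1 / (1 - y)⌋ with hk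
  have hinv : Irrational (1 / (1 - y)) := by
    have := irr_mobius hirr 1 0 1 (-1) (by norm_num) (by push_cast; linarith)
    have he : ((1:ℤ) : ℝ) + ((0:ℤ):ℝ) * y = 1 := by push_cast; ring
    have he2 : ((1:ℤ) : ℝ) + ((-1:ℤ):ℝ) * y = 1 - y := by push_cast; ring
    rwa [he, he2] at this
  have hfl : (k:ℝ) < 1 / (1 - y) :=
    lt_of_le_of_ne (by rw [hk]; exact Int.floor_le _) (Ne.symm (hinv.ne_int k))
  have hfl2 : 1 / (1 - y) < (k:ℝ) + 1 := by
    rw [hk]; exact Int.lt_floor_add_one _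
  have hk1 : 1 ≤ k := by
    have h : (1:ℝ) < 1 / (1 - y) := by rw [lt_div_iff₀ h1y]; linarith
    rw [hk]; exact Int.le_floor.mpr (by exact_mod_cast h.le)
  have hkR : (1:ℝ) ≤ (k:ℝ) := by exact_mod_cast hk1
  have hA : 0 < (k:ℝ) * y - ((k:ℝ) - 1) := by
    have h := (lt_div_iff₀ h1y).mp hfl
    nlinarith
  have hB : 0 < (k:ℝ) - ((k:ℝ) + 1) * y := by
    have h := (div_lt_iff₀ h1y).mp hfl2
    nlinarith
  have hy_ne1 : y ≠ 1 := by linarith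
  have hthr_pos : (0:ℝ) < 2*(k:ℝ)+1 := by linarith
  have hne : y ≠ (2*(k:ℝ) - 1) / (2*(k:ℝ) + 1) := by
    intro h
    exact hirr ⟨(2*(k:ℚ) - 1) / (2*(k:ℚ) + 1), by push_cast; rw [h]⟩
  -- the EICF side point y1 and its floor
  have hy1pos : 0 < (1 - y)/(1 + y) := div_pos h1y h1y'
  have hy1ne0 : (1 - y)/(1 + y) ≠ 0 := ne_of_gt hy1pos
  have hinv1 : 1 / ((1 - y)/(1 + y)) = (1 + y)/(1 - y) := one_div_div _ _
  have hfloor1 : (1 / ((1 - y)/(1 + y)) + 1) / 2 = 1 / (1 - y) := by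
    rw [hinv1]; field_simp; ring
  have hfloorE : ⌊(1 / ((1 - y)/(1 + y)) + 1) / 2⌋ = k := by rw [hfloor1, ← hk]
  rcases hne.lt_or_gt with hlt | hgt
  · -- lower branch: a = k+1, ε = -1
    have hE : oocfE y = -1 := by rw [oocfE, ← hk, if_pos hlt]
    have hAq : oocfA y = k + 1 := by rw [oocfA, ← hk, if_pos hlt]
    have hT : oocfT y = ((k:ℝ) * y - ((k:ℝ) - 1)) / ((k:ℝ) - ((k:ℝ) + 1) * y) := by
      rw [oocfT, if_neg hy_ne1, ← hk, if_pos hlt]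
    have hTirr : Irrational (oocfT y) := by
      rw [hT]
      have := irr_mobius hirr (-(k-1)) k k (-(k+1))
        (by intro h; nlinarith [h]) (by push_cast; nlinarith [hB])
      have he1 : ((-(k-1):ℤ) : ℝ) + ((k:ℤ):ℝ) * y = (k:ℝ) * y - ((k:ℝ) - 1) := by
        push_cast; ring
      have he2 : ((k:ℤ) : ℝ) + ((-(k+1):ℤ):ℝ) * y = (k:ℝ) - ((k:ℝ) + 1) * y := by
        push_cast; ring
      rwa [he1, he2] at this
    have hTmem : oocfT y ∈ Set.Ioo (0:ℝ) 1 := by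
      rw [hT]
      constructor
      · exact div_pos hA hB
      · rw [div_lt_one hB]
        have := (lt_div_iff₀ hthr_pos).mp hlt
        nlinarith
    have hcond : 1 / ((1 - y)/(1 + y)) < 2 * (k:ℝ) := by
      rw [hinv1, div_lt_iff₀ h1y]
      have := (lt_div_iff₀ hthr_pos).mp hlt
      nlinarith
    refine ⟨hTirr, hTmem, ?_, ?_, ?_, ?_, ?_, ?_⟩
    · rw [eicfT, if_neg hy1ne0, hfloorE, if_neg (by push_cast; linarith [hcond]), hT]
      rw [hinv1]
      have hden1 : (1:ℝ) + ((k:ℝ) * y - ((k:ℝ) - 1)) / ((k:ℝ) - ((k:ℝ) + 1) * y) ≠ 0 := by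
        have : (0:ℝ) < 1 + ((k:ℝ) * y - ((k:ℝ) - 1)) / ((k:ℝ) - ((k:ℝ) + 1) * y) := by
          have := div_pos hA hB; linarith
        linarith
      rw [one_sub_div hB.ne', one_add_div hB.ne', div_div_div_cancel_right₀ hB.ne',
        show (k:ℝ) - ((k:ℝ) + 1) * y + ((k:ℝ) * y - ((k:ℝ) - 1)) = 1 - y by ring,
        eq_div_iff h1y.ne', sub_mul, div_mul_cancel₀ _ h1y.ne']
      ring
    · rw [eicfB, hfloorE, hAq, hE]; push_cast; ring
    · rw [eicfEta, hfloorE, if_neg (by push_cast; linarith [hcond]), hE]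
    · omega
    · intro _; omega
    · right; exact hE
  · -- upper branch: a = k, ε = 1
    have hnlt : ¬ y < (2*(k:ℝ) - 1) / (2*(k:ℝ) + 1) := not_lt.mpr hgt.le
    have hE : oocfE y = 1 := by rw [oocfE, ← hk, if_neg hnlt]
    have hAq : oocfA y = k := by rw [oocfA, ← hk, if_neg hnlt]
    have hT : oocfT y = ((k:ℝ) - ((k:ℝ) + 1) * y) / ((k:ℝ) * y - ((k:ℝ) - 1)) := by
      rw [oocfT, if_neg hy_ne1, ← hk, if_neg hnlt]
    have hTirr : Irrational (oocfT y) := by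
      rw [hT]
      have := irr_mobius hirr k (-(k+1)) (-(k-1)) k
        (by intro h; nlinarith [h]) (by push_cast; nlinarith [hA])
      have he1 : ((k:ℤ) : ℝ) + ((-(k+1):ℤ):ℝ) * y = (k:ℝ) - ((k:ℝ) + 1) * y := by
        push_cast; ring
      have he2 : ((-(k-1):ℤ) : ℝ) + ((k:ℤ):ℝ) * y = (k:ℝ) * y - ((k:ℝ) - 1) := by
        push_cast; ring
      rwa [he1, he2] at this
    have hTmem : oocfT y ∈ Set.Ioo (0:ℝ) 1 := by
      rw [hT]
      constructor
      · exact div_pos hB hA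
      · rw [div_lt_one hA]
        have := (div_lt_iff₀ hthr_pos).mp hgt
        nlinarith
    have hcond : 2 * (k:ℝ) < 1 / ((1 - y)/(1 + y)) := by
      rw [hinv1, lt_div_iff₀ h1y]
      have := (div_lt_iff₀ hthr_pos).mp hgt
      nlinarith
    refine ⟨hTirr, hTmem, ?_, ?_, ?_, ?_, ?_, ?_⟩
    · rw [eicfT, if_neg hy1ne0, hfloorE, if_pos (by push_cast; linarith [hcond]), hT]
      rw [hinv1]
      have hden1 : (1:ℝ) + ((k:ℝ) - ((k:ℝ) + 1) * y) / ((k:ℝ) * y - ((k:ℝ) - 1)) ≠ 0 := by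
        have : (0:ℝ) < 1 + ((k:ℝ) - ((k:ℝ) + 1) * y) / ((k:ℝ) * y - ((k:ℝ) - 1)) := by
          have := div_pos hB hA; linarith
        linarith
      rw [one_sub_div hA.ne', one_add_div hA.ne', div_div_div_cancel_right₀ hA.ne',
        show (k:ℝ) * y - ((k:ℝ) - 1) + ((k:ℝ) - ((k:ℝ) + 1) * y) = 1 - y by ring,
        eq_div_iff h1y.ne', sub_mul, div_mul_cancel₀ _ h1y.ne']
      ring
    · rw [eicfB, hfloorE, hAq, hE]; push_cast; ring
    · rw [eicfEta, hfloorE, if_pos (by push_cast; linarith [hcond]), hE]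
    · omega
    · intro h; omega
    · left; exact hE

set_option maxHeartbeats 1000000 in
lemma oocf_main (x : ℝ) (hx : x ∈ Set.Ioo (0 : ℝ) 1) (hirr : Irrational x) (n : ℕ) :
    Irrational (oocfT^[n] x) ∧ oocfT^[n] x ∈ Set.Ioo (0:ℝ) 1 ∧
    eicfT^[n] ((1 - x) / (1 + x)) = (1 - oocfT^[n] x) / (1 + oocfT^[n] x) ∧
    oocfQ x n - oocfP x n = 2 * (eicfPQ ((1-x)/(1+x)) (n+1)).1 ∧
    oocfQ x n + oocfP x n = 2 * (eicfPQ ((1-x)/(1+x)) (n+1)).2 ∧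
    oocfQ' x n - oocfP' x n
      = (eicfPQ ((1-x)/(1+x)) (n+1)).1 - eicfEta0 ((1-x)/(1+x)) n * (eicfPQ ((1-x)/(1+x)) n).1 ∧
    oocfQ' x n + oocfP' x n
      = (eicfPQ ((1-x)/(1+x)) (n+1)).2 - eicfEta0 ((1-x)/(1+x)) n * (eicfPQ ((1-x)/(1+x)) n).2 ∧
    1 ≤ oocfQ x n ∧ 0 ≤ oocfQ' x n ∧ oocfQ' x n ≤ oocfQ x n ∧
    1 ≤ oocfP x n ∧ 0 ≤ oocfP' x n ∧ oocfP' x n ≤ oocfP x n := by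
  set y : ℝ := (1 - x) / (1 + x) with hy
  induction n with
  | zero =>
    refine ⟨hirr, hx, rfl, ?_⟩
    simp [oocfQ, oocfP, oocfQ', oocfP', oocfConv, eicfPQ, eicfEta0]
  | succ n ih =>
    obtain ⟨hzirr, hzmem, hconj, IH1, IH2, IH3, IH4, hq1, hq2, hq3, hp1, hp2, hp3⟩ := ih
    set z : ℝ := oocfT^[n] x with hz
    obtain ⟨hTirr, hTmem, hTconj, hb, heta, ha1, ha2, he⟩ :=
      oocf_pointwise hzmem.1 hzmem.2 hzirr
    have hit : oocfT^[n+1] x = oocfT z := by rw [Function.iterate_succ_apply']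
    have hitE : eicfT^[n+1] y = eicfT (eicfT^[n] y) := by rw [Function.iterate_succ_apply']
    have hconjS : eicfT^[n+1] y = (1 - oocfT^[n+1] x) / (1 + oocfT^[n+1] x) := by
      rw [hitE, hconj, hit]
      exact hTconj
    -- partial quotient abbreviations
    have hbE : eicfB (eicfT^[n] y) = 2 * oocfA z + oocfE z - 1 := by rw [hconj]; exact hb
    have hetaS : eicfEta0 y (n+1) = oocfE z := by
      show eicfEta (eicfT^[n] y) = oocfE z
      rw [hconj]; exact heta
    -- recursion unfoldings
    have hPQ : eicfPQ y (n+2)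
        = (eicfB (eicfT^[n] y) * (eicfPQ y (n+1)).1 + eicfEta0 y n * (eicfPQ y n).1,
           eicfB (eicfT^[n] y) * (eicfPQ y (n+1)).2 + eicfEta0 y n * (eicfPQ y n).2) := rfl
    have hCv : oocfConv x (n+1)
        = (oocfA z * oocfP x n - oocfP' x n,
           oocfA z * oocfQ x n - oocfQ' x n,
           2 * (oocfA z * oocfP x n - oocfP' x n) + oocfE z * oocfP x n,
           2 * (oocfA z * oocfQ x n - oocfQ' x n) + oocfE z * oocfQ x n) := rfl
    have hP' : oocfP' x (n+1) = oocfA z * oocfP x n - oocfP' x n := by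
      rw [oocfP', hCv]
    have hQ' : oocfQ' x (n+1) = oocfA z * oocfQ x n - oocfQ' x n := by
      rw [oocfQ', hCv]
    have hP : oocfP x (n+1) = 2 * (oocfA z * oocfP x n - oocfP' x n) + oocfE z * oocfP x n := by
      rw [oocfP, hCv]
    have hQ : oocfQ x (n+1) = 2 * (oocfA z * oocfQ x n - oocfQ' x n) + oocfE z * oocfQ x n := by
      rw [oocfQ, hCv]
    refine ⟨by rw [hit]; exact hTirr, by rw [hit]; exact hTmem, hconjS, ?_, ?_, ?_, ?_,
      ?_, ?_, ?_, ?_, ?_, ?_⟩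
    · rw [hQ, hP, show n+1+1 = n+2 from rfl, hPQ]
      linear_combination (2 * oocfA z + oocfE z) * IH1 - 2 * IH3
        - 2 * (eicfPQ y (n+1)).1 * hbE
    · rw [hQ, hP, show n+1+1 = n+2 from rfl, hPQ]
      linear_combination (2 * oocfA z + oocfE z) * IH2 - 2 * IH4
        - 2 * (eicfPQ y (n+1)).2 * hbE
    · rw [hQ', hP', show n+1+1 = n+2 from rfl, hPQ, hetaS]
      linear_combination oocfA z * IH1 - IH3 - (eicfPQ y (n+1)).1 * hbE
    · rw [hQ', hP', show n+1+1 = n+2 from rfl, hPQ, hetaS]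
      linear_combination oocfA z * IH2 - IH4 - (eicfPQ y (n+1)).2 * hbE
    · rw [hQ]
      rcases he with he | he <;> rw [he] <;> [skip; have := ha2 he] <;> nlinarith
    · rw [hQ']
      nlinarith
    · rw [hQ', hQ]
      rcases he with he | he <;> rw [he] <;> [skip; have := ha2 he] <;> nlinarith
    · rw [hP]
      rcases he with he | he <;> rw [he] <;> [skip; have := ha2 he] <;> nlinarith
    · rw [hP']
      nlinarith
    · rw [hP', hP]
      rcases he with he | he <;> rw [he] <;> [skip; have := ha2 he] <;> nlinarith

/-- Correspondence between the OOCF of `x` and the EICF of `f(x) = (1-x)/(1+x)`: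
`f(x)` is irrational and for every `n ≥ 1` the EICF partial quotients of `f(x)` are
`b_n = 2 a_n + ε_n - 1`, `η_n = ε_n`, and the EICF convergents of `f(x)` satisfy
`p^E_n / q^E_n = (q_n - p_n)/(q_n + p_n) = f(p_n/q_n)`
(recall `eicfPQ y (n+1) = (p^E_n, q^E_n)`). -/
theorem eicf_of_invol_oocf
    (x : ℝ) (hx : x ∈ Set.Ioo (0 : ℝ) 1) (hirr : Irrational x) :
    Irrational ((1 - x) / (1 + x)) ∧
      ∀ n : ℕ, 1 ≤ n →
        eicfB (eicfT^[n - 1] ((1 - x) / (1 + x))) =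
            2 * oocfA (oocfT^[n - 1] x) + oocfE (oocfT^[n - 1] x) - 1 ∧
          eicfEta (eicfT^[n - 1] ((1 - x) / (1 + x))) = oocfE (oocfT^[n - 1] x) ∧
          ((eicfPQ ((1 - x) / (1 + x)) (n + 1)).1 : ℝ) /
              ((eicfPQ ((1 - x) / (1 + x)) (n + 1)).2 : ℝ) =
            ((oocfQ x n : ℝ) - (oocfP x n : ℝ)) / ((oocfQ x n : ℝ) + (oocfP x n : ℝ)) ∧
          ((oocfQ x n : ℝ) - (oocfP x n : ℝ)) / ((oocfQ x n : ℝ) + (oocfP x n : ℝ)) =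
            (1 - (oocfP x n : ℝ) / (oocfQ x n : ℝ)) /
              (1 + (oocfP x n : ℝ) / (oocfQ x n : ℝ)) := by

  constructor
  · have := irr_mobius hirr 1 (-1) 1 1 (by norm_num) (by push_cast; linarith [hx.1])
    have he1 : ((1:ℤ) : ℝ) + ((-1:ℤ):ℝ) * x = 1 - x := by push_cast; ring
    have he2 : ((1:ℤ) : ℝ) + ((1:ℤ):ℝ) * x = 1 + x := by push_cast; ring
    rwa [he1, he2] at this
  · intro n hn
    obtain ⟨m, rfl⟩ : ∃ m, n = m + 1 := ⟨n - 1, (Nat.succ_pred_eq_of_pos hn).symm⟩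
    have hm : m + 1 - 1 = m := rfl
    rw [hm]
    obtain ⟨hzirr, hzmem, hconj, -, -, -, -, -, -, -, -, -, -⟩ := oocf_main x hx hirr m
    obtain ⟨-, -, -, IH1, IH2, -, -, hq1, -, -, hp1, -, -⟩ := oocf_main x hx hirr (m+1)
    obtain ⟨-, -, hTconj, hb, heta, -, -, -⟩ := oocf_pointwise hzmem.1 hzmem.2 hzirr
    refine ⟨by rw [hconj]; exact hb, by rw [hconj]; exact heta, ?_, ?_⟩
    · have h1 : ((oocfQ x (m+1) : ℝ) - (oocfP x (m+1) : ℝ))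
          = 2 * ((eicfPQ ((1-x)/(1+x)) (m+2)).1 : ℝ) := by exact_mod_cast IH1
      have h2 : ((oocfQ x (m+1) : ℝ) + (oocfP x (m+1) : ℝ))
          = 2 * ((eicfPQ ((1-x)/(1+x)) (m+2)).2 : ℝ) := by exact_mod_cast IH2
      rw [show m + 1 + 1 = m + 2 from rfl, h1, h2,
        mul_div_mul_left _ _ (two_ne_zero (α := ℝ))]
    · have hqR : (0:ℝ) < (oocfQ x (m+1) : ℝ) := by exact_mod_cast lt_of_lt_of_le zero_lt_one hq1
      have hpR : (0:ℝ) < (oocfP x (m+1) : ℝ) := by exact_mod_cast lt_of_lt_of_le zero_lt_one hp1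
      have hsum : (0:ℝ) < (oocfQ x (m+1) : ℝ) + (oocfP x (m+1) : ℝ) := by linarith
      have hden : (0:ℝ) < 1 + (oocfP x (m+1) : ℝ) / (oocfQ x (m+1) : ℝ) := by positivity
      rw [div_eq_div_iff (ne_of_gt hsum) (ne_of_gt hden)]
      field_simp
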